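/- Let {μ_α}_{α∈A} be a continued family of augmented iterated valuations of K[x] with limit key polynomial φ, and let μ be the limit augmented valuation μ = [(μ_α); μ(φ) = γ]. Suppose f ∈ K[x] is such that there exists α₀ ∈ A with μ_α(f) = μ(f) for all α ≥ α₀. Then there exists h ∈ K[x] with deg_x h < deg_x φ and in_μ f = in_μ h. (The h can be taken to be the remainder of Euclidean division of f by φ.) -/

import Mathlib

open Polynomial Finset

section Stmt12Aux

variable {K : Type*} [Field K] {Γ : Type*} [AddCommGroup Γ] [LinearOrder Γ] [IsOrderedAddMonoid Γ]

private lemma stmt12_val_one (ν : Polynomial K → WithTop Γ)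
    (hν0 : ∀ f, ν f = ⊤ ↔ f = 0) (hνm : ∀ f g, ν (f * g) = ν f + ν g) :
    ν 1 = 0 := by
  have h := hνm 1 1
  rw [one_mul] at h
  have hne : ν 1 ≠ ⊤ := by simp [hν0]
  lift ν 1 to Γ using hne with x hx
  rw [← WithTop.coe_add, WithTop.coe_inj] at h
  have : x = 0 := by
    have := add_left_cancel (a := x) (b := (0 : Γ)) (c := x) (by rw [add_zero, ← h])
    exact this.symm
  simp [this]

private lemma stmt12_val_neg (ν : Polynomial K → WithTop Γ)
    (hν0 : ∀ f, ν f = ⊤ ↔ f = 0) (hνm : ∀ f g, ν (f * g) = ν f + ν g)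
    (b : Polynomial K) : ν (-b) = ν b := by
  have h1 : ν 1 = 0 := stmt12_val_one ν hν0 hνm
  have hm1 : ν (-1) = 0 := by
    have h := hνm (-1) (-1)
    rw [neg_one_mul, neg_neg, h1] at h
    have hne : ν (-1) ≠ ⊤ := by
      intro ht
      rw [ht, top_add] at h
      exact (WithTop.top_ne_zero h.symm).elim
    lift ν (-1) to Γ using hne with x hx
    rw [← WithTop.coe_add, ← WithTop.coe_zero, WithTop.coe_inj] at h
    have hx0 : x = 0 := by
      rcases lt_trichotomy x 0 with hlt | heq | hgt
      · exact absurd h.symm (by simpa using (add_lt_add hlt hlt).ne)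
      · exact heq
      · exact absurd h.symm (by simpa using (add_lt_add hgt hgt).ne')
    simp [hx0]
  calc ν (-b) = ν ((-1) * b) := by rw [neg_one_mul]
    _ = ν (-1) + ν b := hνm _ _
    _ = ν b := by rw [hm1, zero_add]

private lemma stmt12_val_add_eq (ν : Polynomial K → WithTop Γ)
    (hν0 : ∀ f, ν f = ⊤ ↔ f = 0) (hνm : ∀ f g, ν (f * g) = ν f + ν g)
    (hνa : ∀ f g, min (ν f) (ν g) ≤ ν (f + g))
    {a b : Polynomial K} (h : ν a < ν b) : ν (a + b) = ν a := by
  refine le_antisymm ?_ ?_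
  · have h2 : min (ν (a + b)) (ν (-b)) ≤ ν a := by
      have := hνa (a + b) (-b)
      simpa using this
    rw [stmt12_val_neg ν hν0 hνm] at h2
    rcases min_le_iff.mp h2 with h3 | h3
    · exact h3
    · exact absurd h3 (not_le.mpr h)
  · have := hνa a b
    rwa [min_eq_left h.le] at this

end Stmt12Aux

section Stmt12Main

variable {K : Type*} [Field K] {Γ : Type*} [AddCommGroup Γ] [LinearOrder Γ] [IsOrderedAddMonoid Γ]
  {A : Type*} [LinearOrder A]

/-- Key auxiliary lemma: no nonzero polynomial can satisfy `μ g < μa α g` for all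
large `α`. Proved by induction on the degree. -/
private lemma stmt12_no_bad
    (μa : A → Polynomial K → WithTop Γ) (μ : Polynomial K → WithTop Γ)
    (φ : Polynomial K) (γ : Γ) (hmonic : φ.Monic)
    (hμa0 : ∀ α f, μa α f = ⊤ ↔ f = 0)
    (hμam : ∀ α f g, μa α (f * g) = μa α f + μa α g)
    (hμaa : ∀ α f g, min (μa α f) (μa α g) ≤ μa α (f + g))
    (hμ0 : ∀ f, μ f = ⊤ ↔ f = 0)
    (hμm : ∀ f g, μ (f * g) = μ f + μ g)
    (hμadd : ∀ f g, min (μ f) (μ g) ≤ μ (f + g))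
    (hγ : ∀ α, μa α φ < (γ : WithTop Γ)) (hμφ : μ φ = (γ : WithTop Γ))
    (hAmin : ∀ f : Polynomial K, f ≠ 0 →
      (∃ α₀, ∀ α ≥ α₀, ∃ h, f = h * φ ∨ μa α f < μa α (f - h * φ)) →
      φ.degree ≤ f.degree)
    (hsmallstab : ∀ g : Polynomial K, g.degree < φ.degree →
      ∃ α₀, ∀ α ≥ α₀, μa α g = μ g)
    (hφ1 : 1 ≤ φ.natDegree) :
    ∀ (n : ℕ) (g : Polynomial K), g ≠ 0 → g.natDegree ≤ n →
      (∃ β, ∀ α ≥ β, μ g < μa α g) → False := by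
  have hsmall : ∀ g : Polynomial K, g.degree < φ.degree →
      (∃ β, ∀ α ≥ β, μ g < μa α g) → False := by
    rintro g hdeg ⟨β, hβ⟩
    obtain ⟨α₁, hα₁⟩ := hsmallstab g hdeg
    have h := hβ (max β α₁) (le_max_left _ _)
    rw [hα₁ _ (le_max_right _ _)] at h
    exact lt_irrefl _ h
  have hφdeg : (0 : WithBot ℕ) < φ.degree := by
    rw [← natDegree_pos_iff_degree_pos]
    omega
  intro n
  induction n with
  | zero =>
    intro g hg hd hbad
    refine hsmall g ?_ hbad
    calc g.degree ≤ (g.natDegree : WithBot ℕ) := degree_le_natDegree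
      _ ≤ (0 : ℕ) := by exact_mod_cast hd
      _ < φ.degree := hφdeg
  | succ n ih =>
    intro g hg hd hbad
    obtain ⟨β, hβ⟩ := hbad
    by_cases hq : g /ₘ φ = 0
    · exact hsmall g ((divByMonic_eq_zero_iff hmonic).mp hq) ⟨β, hβ⟩
    set q₁ := g /ₘ φ with hq₁def
    set r₁ := g %ₘ φ with hr₁def
    have hr₁deg : r₁.degree < φ.degree := degree_modByMonic_lt g hmonic
    obtain ⟨α₁, hα₁⟩ := hsmallstab r₁ hr₁deg
    have hq₁top : μ q₁ ≠ ⊤ := fun h => hq ((hμ0 q₁).mp h)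
    have hgd : g = r₁ + φ * q₁ := (modByMonic_add_div g φ).symm
    have hming : min (μ r₁) ((γ : WithTop Γ) + μ q₁) ≤ μ g := by
      have h := hμadd r₁ (φ * q₁)
      rw [hμm, hμφ] at h
      rw [hgd]
      exact h
    by_cases hcomp : μ r₁ ≤ (γ : WithTop Γ) + μ q₁
    · -- the tie / small-side case: contradiction with `hAmin`
      have hr₁ne : r₁ ≠ 0 := by
        intro h0
        rw [h0, (hμ0 0).mpr rfl] at hcomp
        rcases WithTop.add_eq_top.mp (top_le_iff.mp hcomp) with h | h
        · exact WithTop.coe_ne_top h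
        · exact hq₁top h
      have key : ∀ α ≥ max β α₁, μa α r₁ < μa α (r₁ - (-q₁) * φ) := by
        intro α hα
        have h1 : μa α r₁ = μ r₁ := hα₁ α (le_trans (le_max_right _ _) hα)
        have h2 : μ g < μa α g := hβ α (le_trans (le_max_left _ _) hα)
        have heq : r₁ - (-q₁) * φ = g := by rw [hgd]; ring
        rw [heq, h1]
        calc μ r₁ = min (μ r₁) ((γ : WithTop Γ) + μ q₁) := (min_eq_left hcomp).symm
          _ ≤ μ g := hming
          _ < μa α g := h2
      have := hAmin r₁ hr₁ne ⟨max β α₁, fun α hα => ⟨-q₁, Or.inr (key α hα)⟩⟩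
      exact absurd this (not_le.mpr hr₁deg)
    · push_neg at hcomp
      -- `μ q₁ < μa α q₁` eventually; recurse
      have hkey : ∀ α ≥ max β α₁, μ q₁ < μa α q₁ := by
        intro α hα
        have h1 : μa α r₁ = μ r₁ := hα₁ α (le_trans (le_max_right _ _) hα)
        have h2 : μ g < μa α g := hβ α (le_trans (le_max_left _ _) hα)
        have h3 : (γ : WithTop Γ) + μ q₁ ≤ μ g := by
          calc (γ : WithTop Γ) + μ q₁ = min (μ r₁) ((γ : WithTop Γ) + μ q₁) :=
                (min_eq_right hcomp.le).symm
            _ ≤ μ g := hming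
        have h4 : (γ : WithTop Γ) + μ q₁ < μa α (φ * q₁) := by
          have heq : φ * q₁ = g + (-r₁) := by rw [hgd]; ring
          rw [heq]
          refine lt_of_lt_of_le ?_ (hμaa α g (-r₁))
          rw [lt_min_iff]
          constructor
          · exact lt_of_le_of_lt h3 h2
          · rw [stmt12_val_neg (μa α) (hμa0 α) (hμam α), h1]
            exact hcomp
        by_contra hle
        push_neg at hle
        have h5 : μa α (φ * q₁) = μa α φ + μa α q₁ := hμam α φ q₁
        have h6 : μa α φ + μa α q₁ ≤ μa α φ + μ q₁ := add_le_add_right hle _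
        have h7 : μa α φ + μ q₁ < (γ : WithTop Γ) + μ q₁ :=
          WithTop.add_lt_add_right hq₁top (hγ α)
        exact absurd ((h4.trans_le (h5.le.trans h6)).trans h7) (lt_irrefl _)
      have hqdeg : q₁.natDegree ≤ n := by
        have := natDegree_divByMonic g hmonic
        rw [← hq₁def] at this
        omega
      exact ih q₁ hq hqdeg ⟨max β α₁, hkey⟩

end Stmt12Main

/-- Let `{μ_α}` be a continued family of augmented iterated valuations with
limit key polynomial `φ` and limit augmented valuation `μ = [(μ_α); μ(φ) = γ]`.
If `f` satisfies `μ_α(f) = μ(f)` for all `α ≥ α₀`, then there is `h` with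
`deg h < deg φ` and `in_μ f = in_μ h`. -/
theorem stmt12 {K : Type*} [Field K] {Γ : Type*} [AddCommGroup Γ] [LinearOrder Γ] [IsOrderedAddMonoid Γ]
    {A : Type*} [LinearOrder A]
    (μa : A → Polynomial K → WithTop Γ) (μ : Polynomial K → WithTop Γ)
    (φ : Polynomial K) (γ : Γ) (hmonic : φ.Monic)
    (hμa0 : ∀ α f, μa α f = ⊤ ↔ f = 0)
    (hμam : ∀ α f g, μa α (f * g) = μa α f + μa α g)
    (hμaa : ∀ α f g, min (μa α f) (μa α g) ≤ μa α (f + g))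
    (hμ0 : ∀ f, μ f = ⊤ ↔ f = 0)
    (hμm : ∀ f g, μ (f * g) = μ f + μ g)
    (hμadd : ∀ f g, min (μ f) (μ g) ≤ μ (f + g))
    (hmono : ∀ α β : A, α ≤ β → ∀ f, μa α f ≤ μa β f)
    (hγ : ∀ α, μa α φ < (γ : WithTop Γ)) (hμφ : μ φ = (γ : WithTop Γ))
    (hAmin : ∀ f : Polynomial K, f ≠ 0 →
      (∃ α₀, ∀ α ≥ α₀, ∃ h, f = h * φ ∨ μa α f < μa α (f - h * φ)) →
      φ.degree ≤ f.degree)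
    (hAirr : ∀ f g : Polynomial K,
      (∃ α₀, ∀ α ≥ α₀, ∃ h, f * g = h * φ ∨ μa α (f * g) < μa α (f * g - h * φ)) →
      (∃ α₀, ∀ α ≥ α₀, ∃ h, f = h * φ ∨ μa α f < μa α (f - h * φ)) ∨
      (∃ α₀, ∀ α ≥ α₀, ∃ h, g = h * φ ∨ μa α g < μa α (g - h * φ)))
    (hsmallstab : ∀ g : Polynomial K, g.degree < φ.degree →
      ∃ α₀, ∀ α ≥ α₀, μa α g = μ g)
    (haug : ∀ (m : ℕ) (fc : ℕ → Polynomial K), (∀ j, (fc j).degree < φ.degree) →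
      μ (∑ j ∈ range (m + 1), fc j * φ ^ j)
        = (range (m + 1)).inf fun j => μ (fc j) + ((j • γ : Γ) : WithTop Γ))
    (f : Polynomial K) (hf : f ≠ 0)
    (hstab : ∃ α₀, ∀ α ≥ α₀, μa α f = μ f) :
    ∃ h : Polynomial K, h.degree < φ.degree ∧ (f = h ∨ μ f < μ (f - h)) := by
  obtain ⟨α₀, hα₀⟩ := hstab
  -- φ has positive degree
  have hφ1 : 1 ≤ φ.natDegree := by
    by_contra h
    push_neg at h
    have hφeq : φ = 1 := hmonic.natDegree_eq_zero.mp (by omega)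
    have h1 : μ φ = 0 := by rw [hφeq]; exact stmt12_val_one μ hμ0 hμm
    have hγ0 : (γ : WithTop Γ) = 0 := by rw [← hμφ, h1]
    have := hγ α₀
    rw [hγ0, hφeq, stmt12_val_one (μa α₀) (hμa0 α₀) (hμam α₀)] at this
    exact lt_irrefl _ this
  by_cases hq : f /ₘ φ = 0
  · exact ⟨f, (divByMonic_eq_zero_iff hmonic).mp hq, Or.inl rfl⟩
  · set q := f /ₘ φ with hqdef
    set r := f %ₘ φ with hrdef
    refine ⟨r, degree_modByMonic_lt f hmonic, Or.inr ?_⟩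
    have hqtop : μ q ≠ ⊤ := fun h => hq ((hμ0 q).mp h)
    have hfd : f = r + φ * q := (modByMonic_add_div f φ).symm
    have hfr : f - r = φ * q := by rw [hfd]; ring
    rw [hfr, hμm, hμφ]
    by_cases hcomp : μ r < (γ : WithTop Γ) + μ q
    · -- μ f = μ r < γ + μ q
      have hμφq : μ (φ * q) = (γ : WithTop Γ) + μ q := by rw [hμm, hμφ]
      have : μ f = μ r := by
        rw [hfd]
        exact stmt12_val_add_eq μ hμ0 hμm hμadd (by rw [hμφq]; exact hcomp)
      rw [this]
      exact hcomp
    · push_neg at hcomp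
      by_contra hge
      push_neg at hge
      -- then μ q < μa α q for all large α — contradiction with stmt12_no_bad
      obtain ⟨α₁, hα₁⟩ := hsmallstab r (degree_modByMonic_lt f hmonic)
      refine stmt12_no_bad μa μ φ γ hmonic hμa0 hμam hμaa hμ0 hμm hμadd hγ hμφ hAmin
        hsmallstab hφ1 q.natDegree q hq le_rfl ⟨max α₀ α₁, ?_⟩
      intro α hα
      have h1 : μa α f = μ f := hα₀ α (le_trans (le_max_left _ _) hα)
      have h2 : μa α r = μ r := hα₁ α (le_trans (le_max_right _ _) hα)
      have h4 : (γ : WithTop Γ) + μ q ≤ μa α (φ * q) := by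
        have heq : φ * q = f + (-r) := by rw [hfd]; ring
        rw [heq]
        refine le_trans ?_ (hμaa α f (-r))
        rw [le_min_iff]
        constructor
        · rw [h1]; exact hge
        · rw [stmt12_val_neg (μa α) (hμa0 α) (hμam α), h2]; exact hcomp
      by_contra hle
      push_neg at hle
      have h5 : μa α (φ * q) = μa α φ + μa α q := hμam α φ q
      have h6 : μa α φ + μa α q ≤ μa α φ + μ q := add_le_add_right hle _
      have h7 : μa α φ + μ q < (γ : WithTop Γ) + μ q :=
        WithTop.add_lt_add_right hqtop (hγ α)
      have : (γ : WithTop Γ) + μ q < (γ : WithTop Γ) + μ q :=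
        lt_of_le_of_lt (le_trans (h4.trans (le_of_eq h5)) h6) h7
      exact lt_irrefl _ this
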